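/- For every real t ∈ [0,1] and every λ ∈ [0,1], (1/2)(1 + t²) + (2λ/3)(1 − t^{3/2}) ≥ (3 + 4λ − λ⁴)/6, with the minimum over t attained at t = λ². -/
import Mathlib

theorem stmt4 (t lam : ℝ) (ht : t ∈ Set.Icc (0:ℝ) 1) (hlam : lam ∈ Set.Icc (0:ℝ) 1) :
    (1/2) * (1 + t ^ 2) + (2 * lam / 3) * (1 - t ^ ((3:ℝ)/2)) ≥
      (3 + 4 * lam - lam ^ 4) / 6 ∧
    (1/2) * (1 + (lam ^ 2) ^ 2) + (2 * lam / 3) * (1 - (lam ^ 2) ^ ((3:ℝ)/2)) =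
      (3 + 4 * lam - lam ^ 4) / 6 := by
  obtain ⟨ht0, ht1⟩ := ht
  obtain ⟨hl0, hl1⟩ := hlam
  have h32 : ∀ x : ℝ, 0 ≤ x → x ^ ((3:ℝ)/2) = Real.sqrt x ^ 3 := by
    intro x hx
    rw [Real.sqrt_eq_rpow, ← Real.rpow_natCast (x ^ ((1:ℝ)/2)) 3, ← Real.rpow_mul hx]
    norm_num
  have hs : Real.sqrt t ^ 2 = t := Real.sq_sqrt ht0
  have hs0 : 0 ≤ Real.sqrt t := Real.sqrt_nonneg t
  have hslam : Real.sqrt (lam ^ 2) = lam := Real.sqrt_sq hl0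
  constructor
  · rw [h32 t ht0]
    set s := Real.sqrt t
    nlinarith [mul_nonneg (mul_nonneg hl0 hs0) hs0, sq_nonneg (s - lam),
      mul_nonneg (sq_nonneg (s - lam)) (sq_nonneg s),
      mul_nonneg (mul_nonneg (sq_nonneg (s - lam)) hl0) hs0,
      mul_nonneg (sq_nonneg (s - lam)) (sq_nonneg lam)]
  · rw [h32 (lam ^ 2) (sq_nonneg lam), hslam]
    ring
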